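/- arXiv:2003.04001 — 2 statements merged into one kernel-verified Lean document; each statement's English description precedes it below -/
import Mathlib

section
/- For every $d \geq 1$ and $k \in \{0,1,\ldots,d\}$, the limit as $n \to \infty$ of $\frac{2^{d-k}\binom{n}{d-k} C(n-d+k, k+1)}{C(n,d+1)}$ equals $2^{d-k}\binom{d}{k}$. -/
open Filter

/-- `C r s = 2 * ∑_{m=0}^{s-1} choose (r-1) m` -/
def schlaefliC (r s : ℕ) : ℕ := 2 * ∑ m ∈ Finset.range s, Nat.choose (r - 1) m

private lemma choose_cast_eq (a m : ℕ) :
    ∀ᶠ n : ℕ in atTop, (((n - a).choose m : ℝ)) =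
      (∏ i ∈ Finset.range m, ((n : ℝ) - (a + i))) / m.factorial := by
  filter_upwards [eventually_ge_atTop (a + m)] with n hn
  have key : (n - a).descFactorial m = ∏ i ∈ Finset.range m, (n - (a + i)) := by
    rw [Nat.descFactorial_eq_prod_range]
    exact Finset.prod_congr rfl fun i _ => by omega
  have h2 : (m.factorial : ℝ) * ((n - a).choose m : ℝ) =
      ∏ i ∈ Finset.range m, ((n : ℝ) - (a + i)) := by
    rw [← Nat.cast_mul, ← Nat.descFactorial_eq_factorial_mul_choose, key, Nat.cast_prod]
    refine Finset.prod_congr rfl fun i hi => ?_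
    have hi' : i < m := Finset.mem_range.mp hi
    have : a + i ≤ n := by omega
    push_cast [Nat.cast_sub this]
    ring
  have hm : (m.factorial : ℝ) ≠ 0 := Nat.cast_ne_zero.mpr m.factorial_ne_zero
  rw [eq_div_iff hm, mul_comm]
  exact h2

private lemma tendsto_choose_div_pow (a m : ℕ) :
    Tendsto (fun n : ℕ => (((n - a).choose m : ℝ)) / (n : ℝ) ^ m) atTop
      (nhds (1 / m.factorial)) := by
  have heq : ∀ᶠ n : ℕ in atTop,
      (∏ i ∈ Finset.range m, (1 - ((a : ℝ) + i) / n)) / m.factorial =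
        (((n - a).choose m : ℝ)) / (n : ℝ) ^ m := by
    filter_upwards [choose_cast_eq a m, eventually_gt_atTop 0] with n hn hn0
    have hnne : (n : ℝ) ≠ 0 := Nat.cast_ne_zero.mpr hn0.ne'
    have hp : ∀ i ∈ Finset.range m, (1 - ((a : ℝ) + i) / n) = ((n : ℝ) - (a + i)) / n :=
      fun i _ => by field_simp
    rw [Finset.prod_congr rfl hp, Finset.prod_div_distrib, Finset.prod_const,
      Finset.card_range, hn, div_div, div_div]
    ring
  have hlim : Tendsto (fun n : ℕ =>
      (∏ i ∈ Finset.range m, (1 - ((a : ℝ) + i) / n)) / m.factorial) atTop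
      (nhds (1 / m.factorial)) := by
    have hprod : Tendsto (fun n : ℕ => ∏ i ∈ Finset.range m, (1 - ((a : ℝ) + i) / n))
        atTop (nhds 1) := by
      have h1 : ∀ i ∈ Finset.range m,
          Tendsto (fun n : ℕ => (1 : ℝ) - ((a : ℝ) + i) / n) atTop (nhds 1) := by
        intro i _
        have h0 : Tendsto (fun n : ℕ => ((a : ℝ) + i) / n) atTop (nhds 0) :=
          tendsto_const_div_atTop_nhds_zero_nat _
        simpa using tendsto_const_nhds.sub h0
      have := tendsto_finset_prod (Finset.range m) h1
      simpa using this
    simpa using hprod.div_const (m.factorial : ℝ)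
  exact Tendsto.congr' heq hlim

private lemma tendsto_choose_div_pow_lt (a m j : ℕ) (h : m < j) :
    Tendsto (fun n : ℕ => (((n - a).choose m : ℝ)) / (n : ℝ) ^ j) atTop (nhds 0) := by
  have heq : ∀ᶠ n : ℕ in atTop,
      ((((n - a).choose m : ℝ)) / (n : ℝ) ^ m) * (1 / (n : ℝ) ^ (j - m)) =
        (((n - a).choose m : ℝ)) / (n : ℝ) ^ j := by
    filter_upwards [eventually_gt_atTop 0] with n hn
    have hnne : (n : ℝ) ≠ 0 := Nat.cast_ne_zero.mpr hn.ne'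
    rw [div_mul_div_comm, mul_one, ← pow_add, Nat.add_sub_cancel' h.le]
  have h2 : Tendsto (fun n : ℕ => (1 : ℝ) / (n : ℝ) ^ (j - m)) atTop (nhds 0) := by
    apply Tendsto.div_atTop tendsto_const_nhds
    exact (tendsto_pow_atTop (by omega : j - m ≠ 0)).comp tendsto_natCast_atTop_atTop
  have := (tendsto_choose_div_pow a m).mul h2
  rw [mul_zero] at this
  exact Tendsto.congr' heq this

private lemma tendsto_sum_choose (a j : ℕ) :
    Tendsto (fun n : ℕ => (∑ m ∈ Finset.range (j + 1), ((n - a).choose m : ℝ)) / (n : ℝ) ^ j)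
      atTop (nhds (1 / j.factorial)) := by
  have heq : ∀ n : ℕ,
      (∑ m ∈ Finset.range j, ((n - a).choose m : ℝ) / (n : ℝ) ^ j) +
          ((n - a).choose j : ℝ) / (n : ℝ) ^ j =
        (∑ m ∈ Finset.range (j + 1), ((n - a).choose m : ℝ)) / (n : ℝ) ^ j := by
    intro n
    rw [Finset.sum_range_succ, ← Finset.sum_div, add_div]
  have h1 : Tendsto (fun n : ℕ => ∑ m ∈ Finset.range j, ((n - a).choose m : ℝ) / (n : ℝ) ^ j)
      atTop (nhds 0) := by
    have h2 : ∀ m ∈ Finset.range j,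
        Tendsto (fun n : ℕ => ((n - a).choose m : ℝ) / (n : ℝ) ^ j) atTop (nhds 0) :=
      fun m hm => tendsto_choose_div_pow_lt a m j (Finset.mem_range.mp hm)
    have := tendsto_finset_sum (Finset.range j) h2
    simpa using this
  have := h1.add (tendsto_choose_div_pow a j)
  rw [zero_add] at this
  exact Tendsto.congr heq this

theorem expected_face_numbers_limit (d k : ℕ) (hd : 1 ≤ d) (hk : k ≤ d) :
    Tendsto (fun n : ℕ =>
        ((2 : ℝ) ^ (d - k) * (Nat.choose n (d - k) : ℝ) *
            (schlaefliC (n - d + k) (k + 1) : ℝ)) / (schlaefliC n (d + 1) : ℝ))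
      atTop (nhds ((2 : ℝ) ^ (d - k) * (Nat.choose d k : ℝ))) := by
  have hkf : (k.factorial : ℝ) ≠ 0 := Nat.cast_ne_zero.mpr k.factorial_ne_zero
  have hdf : (d.factorial : ℝ) ≠ 0 := Nat.cast_ne_zero.mpr d.factorial_ne_zero
  have hdkf : ((d - k).factorial : ℝ) ≠ 0 := Nat.cast_ne_zero.mpr (d - k).factorial_ne_zero
  -- numerator over n^d
  have hnum : Tendsto (fun n : ℕ =>
      ((2 : ℝ) ^ (d - k) * (Nat.choose n (d - k) : ℝ) *
        (schlaefliC (n - d + k) (k + 1) : ℝ)) / (n : ℝ) ^ d) atTop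
      (nhds ((2 : ℝ) ^ (d - k) * (1 / (d - k).factorial) * (2 * (1 / k.factorial)))) := by
    have hc : Tendsto (fun n : ℕ => ((Nat.choose n (d - k) : ℝ)) / (n : ℝ) ^ (d - k)) atTop
        (nhds (1 / (d - k).factorial)) := by
      have := tendsto_choose_div_pow 0 (d - k)
      simpa using this
    have hs : Tendsto (fun n : ℕ => ((schlaefliC (n - d + k) (k + 1) : ℝ)) / (n : ℝ) ^ k) atTop
        (nhds (2 * (1 / k.factorial))) := by
      have heq : ∀ᶠ n : ℕ in atTop,
          2 * ((∑ m ∈ Finset.range (k + 1), ((n - (d + 1 - k)).choose m : ℝ)) / (n : ℝ) ^ k) =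
            ((schlaefliC (n - d + k) (k + 1) : ℝ)) / (n : ℝ) ^ k := by
        filter_upwards [eventually_ge_atTop (d + 1)] with n hn
        have harg : n - d + k - 1 = n - (d + 1 - k) := by omega
        rw [schlaefliC, harg]
        push_cast
        ring
      have := (tendsto_sum_choose (d + 1 - k) k).const_mul (2 : ℝ)
      exact Tendsto.congr' heq this
    have heq2 : ∀ᶠ n : ℕ in atTop,
        (2 : ℝ) ^ (d - k) * (((Nat.choose n (d - k) : ℝ)) / (n : ℝ) ^ (d - k)) *
          (((schlaefliC (n - d + k) (k + 1) : ℝ)) / (n : ℝ) ^ k) =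
        ((2 : ℝ) ^ (d - k) * (Nat.choose n (d - k) : ℝ) *
          (schlaefliC (n - d + k) (k + 1) : ℝ)) / (n : ℝ) ^ d := by
      filter_upwards [eventually_gt_atTop 0] with n hn
      have hpow : (n : ℝ) ^ (d - k) * (n : ℝ) ^ k = (n : ℝ) ^ d := by
        rw [← pow_add, Nat.sub_add_cancel hk]
      have hring : (2 : ℝ) ^ (d - k) * (((Nat.choose n (d - k) : ℝ)) / (n : ℝ) ^ (d - k)) *
          (((schlaefliC (n - d + k) (k + 1) : ℝ)) / (n : ℝ) ^ k) =
          ((2 : ℝ) ^ (d - k) * (Nat.choose n (d - k) : ℝ) *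
            (schlaefliC (n - d + k) (k + 1) : ℝ)) / ((n : ℝ) ^ (d - k) * (n : ℝ) ^ k) := by
        ring
      rw [hring, hpow]
    exact Tendsto.congr' heq2 ((tendsto_const_nhds.mul hc).mul hs)
  -- denominator over n^d
  have hden : Tendsto (fun n : ℕ => ((schlaefliC n (d + 1) : ℝ)) / (n : ℝ) ^ d) atTop
      (nhds (2 * (1 / d.factorial))) := by
    have heq : ∀ n : ℕ,
        2 * ((∑ m ∈ Finset.range (d + 1), ((n - 1).choose m : ℝ)) / (n : ℝ) ^ d) =
          ((schlaefliC n (d + 1) : ℝ)) / (n : ℝ) ^ d := by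
      intro n
      rw [schlaefliC]
      push_cast
      ring
    have := (tendsto_sum_choose 1 d).const_mul (2 : ℝ)
    exact Tendsto.congr heq this
  have hden_ne : (2 : ℝ) * (1 / d.factorial) ≠ 0 := by positivity
  have hdiv := hnum.div hden hden_ne
  have heq3 : ∀ᶠ n : ℕ in atTop,
      (((2 : ℝ) ^ (d - k) * (Nat.choose n (d - k) : ℝ) *
          (schlaefliC (n - d + k) (k + 1) : ℝ)) / (n : ℝ) ^ d) /
        (((schlaefliC n (d + 1) : ℝ)) / (n : ℝ) ^ d) =
      ((2 : ℝ) ^ (d - k) * (Nat.choose n (d - k) : ℝ) *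
          (schlaefliC (n - d + k) (k + 1) : ℝ)) / (schlaefliC n (d + 1) : ℝ) := by
    filter_upwards [eventually_gt_atTop 0] with n hn
    have hnne : ((n : ℝ)) ^ d ≠ 0 := by positivity
    rw [div_div_div_comm, div_self hnne, div_one]
  have hval : ((2 : ℝ) ^ (d - k) * (1 / (d - k).factorial) * (2 * (1 / k.factorial))) /
      ((2 : ℝ) * (1 / d.factorial)) = (2 : ℝ) ^ (d - k) * (Nat.choose d k : ℝ) := by
    rw [Nat.cast_choose ℝ hk]
    field_simp
  rw [← hval]
  exact Tendsto.congr' heq3 hdiv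
end

section
/- Fix $d \geq 1$ and $m \geq d+1$, and fix $x_1, \ldots, x_m \in \mathbb{R}^d \setminus \{0\}$ in convex position. Let $f_n(y) = \frac{2}{\omega_{d+1}} \frac{n^d}{(1+n^2\|y\|^2)^{(d+1)/2}}$ and define $\varphi_n = \frac{n!}{(n-m)!} \left(\prod_{i=1}^m f_n(x_i)\right) \left(1 - \int_{\mathbb{R}^d \setminus K} f_n(y)\,dy\right)^{n-m}$, where $K = \mathrm{conv}(\{x_1,\ldots,x_m\})$. Assume $\int_{\mathbb{R}^d\setminus K}\|y\|^{-(d+1)}dy < \infty$. Then $\lim_{n\to\infty} \varphi_n = \left(\frac{2}{\omega_{d+1}}\right)^m \left(\prod_{i=1}^m \|x_i\|^{-(d+1)}\right) \exp\left(-\frac{2}{\omega_{d+1}} \int_{\mathbb{R}^d \setminus K} \frac{dy}{\|y\|^{d+1}}\right)$. -/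
open MeasureTheory Filter

/-- Surface area of the unit sphere `S^{d-1}` in `ℝ^d`. -/
noncomputable def omega (d : ℕ) : ℝ := 2 * Real.pi ^ ((d : ℝ) / 2) / Real.Gamma ((d : ℝ) / 2)

lemma omega_pos {d : ℕ} (hd : 1 ≤ d) : 0 < omega d := by
  have h2 : (0:ℝ) < (d : ℝ) / 2 := by
    have : (1:ℝ) ≤ (d:ℝ) := by exact_mod_cast hd
    linarith
  have hpi : (0:ℝ) < Real.pi ^ ((d : ℝ) / 2) := Real.rpow_pos_of_pos Real.pi_pos _
  have hG : 0 < Real.Gamma ((d : ℝ) / 2) := Real.Gamma_pos_of_pos h2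
  unfold omega
  positivity

lemma sq_rpow_half (a : ℝ) (ha : 0 ≤ a) (d : ℕ) :
    (a ^ 2) ^ (((d : ℝ) + 1) / 2) = a ^ (d + 1) := by
  rw [← Real.rpow_natCast a 2, ← Real.rpow_mul ha, ← Real.rpow_natCast a (d + 1)]
  congr 1
  push_cast
  ring

lemma aux_tendsto (d : ℕ) {r : ℝ} (hr : 0 < r) :
    Tendsto (fun n : ℕ => (n : ℝ) ^ (d + 1) /
        (1 + (n : ℝ) ^ 2 * r ^ 2) ^ (((d : ℝ) + 1) / 2)) atTop
      (nhds (r ^ (-((d : ℝ) + 1)))) := by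
  have hbase : Tendsto (fun n : ℕ => (n : ℝ) ^ 2 / (1 + (n : ℝ) ^ 2 * r ^ 2)) atTop
      (nhds ((r ^ 2)⁻¹)) := by
    have h1 : Tendsto (fun n : ℕ => ((n : ℝ) ^ 2)⁻¹) atTop (nhds 0) := by
      have := ((tendsto_one_div_atTop_nhds_zero_nat (𝕜 := ℝ)).mul tendsto_one_div_atTop_nhds_zero_nat)
      simpa [one_div, ← mul_inv, ← sq] using this
    have h2 : Tendsto (fun n : ℕ => (((n : ℝ) ^ 2)⁻¹ + r ^ 2)⁻¹) atTop
        (nhds ((0 + r ^ 2)⁻¹)) :=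
      (h1.add tendsto_const_nhds).inv₀ (by positivity)
    rw [zero_add] at h2
    refine h2.congr' ?_
    filter_upwards [eventually_ge_atTop 1] with n hn
    have hn0 : ((n : ℝ) ^ 2) ≠ 0 := by
      have : (1:ℝ) ≤ (n:ℝ) := by exact_mod_cast hn
      positivity
    field_simp
  have hc : ContinuousAt (fun t : ℝ => t ^ (((d : ℝ) + 1) / 2)) ((r ^ 2)⁻¹) :=
    Real.continuousAt_rpow_const _ _ (Or.inl (by positivity))
  have h3 := hc.tendsto.comp hbase
  have hval : ((r ^ 2)⁻¹) ^ (((d : ℝ) + 1) / 2) = r ^ (-((d : ℝ) + 1)) := by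
    rw [Real.inv_rpow (sq_nonneg r), sq_rpow_half r hr.le,
      ← Real.rpow_natCast r (d + 1), ← Real.rpow_neg hr.le]
    congr 1
    push_cast
    ring
  rw [hval] at h3
  refine h3.congr fun n => ?_
  have hden : (0:ℝ) ≤ 1 + (n : ℝ) ^ 2 * r ^ 2 := by positivity
  simp only [Function.comp]
  rw [Real.div_rpow (by positivity) hden, sq_rpow_half _ (Nat.cast_nonneg n)]

lemma aux_bound (d n : ℕ) {r : ℝ} (hr : 0 < r) :
    (n : ℝ) ^ (d + 1) / (1 + (n : ℝ) ^ 2 * r ^ 2) ^ (((d : ℝ) + 1) / 2)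
      ≤ r ^ (-((d : ℝ) + 1)) := by
  have hrpow : r ^ (-((d : ℝ) + 1)) = (r ^ (d + 1))⁻¹ := by
    rw [← Real.rpow_natCast r (d + 1), ← Real.rpow_neg hr.le]
    congr 1
    push_cast
    ring
  rcases Nat.eq_zero_or_pos n with h0 | hn
  · subst h0
    simp only [Nat.cast_zero, zero_pow (Nat.succ_ne_zero d), zero_div]
    rw [hrpow]
    positivity
  · have hn1 : (1:ℝ) ≤ (n:ℝ) := by exact_mod_cast hn
    have hD : ((n : ℝ) * r) ^ (d + 1) ≤ (1 + (n : ℝ) ^ 2 * r ^ 2) ^ (((d : ℝ) + 1) / 2) := by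
      have h1 : (((n : ℝ) * r) ^ 2) ^ (((d : ℝ) + 1) / 2)
          ≤ (1 + (n : ℝ) ^ 2 * r ^ 2) ^ (((d : ℝ) + 1) / 2) := by
        apply Real.rpow_le_rpow (by positivity) (by nlinarith) (by positivity)
      rwa [sq_rpow_half _ (by positivity)] at h1
    have hnr : (0:ℝ) < ((n : ℝ) * r) ^ (d + 1) := by positivity
    calc (n : ℝ) ^ (d + 1) / (1 + (n : ℝ) ^ 2 * r ^ 2) ^ (((d : ℝ) + 1) / 2)
        ≤ (n : ℝ) ^ (d + 1) / ((n : ℝ) * r) ^ (d + 1) :=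
          div_le_div_of_nonneg_left (by positivity) hnr hD
      _ = r ^ (-((d : ℝ) + 1)) := by
          rw [hrpow, mul_pow]
          have : ((n:ℝ) ^ (d+1)) ≠ 0 := by positivity
          field_simp
  
lemma aux_exp (u : ℕ → ℝ) (t : ℝ) (h : Tendsto (fun n : ℕ => (n : ℝ) * u n) atTop (nhds t)) :
    Tendsto (fun n : ℕ => (1 + u n) ^ n) atTop (nhds (Real.exp t)) := by
  have hu0 : Tendsto u atTop (nhds 0) := by
    have h1 := h.mul tendsto_one_div_atTop_nhds_zero_nat
    rw [mul_zero] at h1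
    refine h1.congr' ?_
    filter_upwards [eventually_ge_atTop 1] with n hn
    have : (n:ℝ) ≠ 0 := by
      have : (1:ℝ) ≤ (n:ℝ) := by exact_mod_cast hn
      linarith
    field_simp
  have hpos : ∀ᶠ n in atTop, 0 < 1 + u n := by
    filter_upwards [hu0.eventually (eventually_gt_nhds (by norm_num : (-1:ℝ) < 0))] with n hn
    linarith
  have hlog : Tendsto (fun n : ℕ => (n : ℝ) * Real.log (1 + u n)) atTop (nhds t) := by
    have hlow : Tendsto (fun n : ℕ => ((n : ℝ) * u n) * (1 + u n)⁻¹) atTop (nhds t) := by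
      have h1 : Tendsto (fun n : ℕ => 1 + u n) atTop (nhds (1 + 0)) :=
        tendsto_const_nhds.add hu0
      rw [add_zero] at h1
      have := h.mul (h1.inv₀ one_ne_zero)
      simpa using this
    refine tendsto_of_tendsto_of_tendsto_of_le_of_le' hlow h ?_ ?_
    · filter_upwards [hpos] with n hn
      have hlb : 1 - (1 + u n)⁻¹ ≤ Real.log (1 + u n) := Real.one_sub_inv_le_log_of_pos hn
      have heq : u n * (1 + u n)⁻¹ = 1 - (1 + u n)⁻¹ := by
        field_simp
        ring
      have : u n * (1 + u n)⁻¹ ≤ Real.log (1 + u n) := heq ▸ hlb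
      calc (n : ℝ) * u n * (1 + u n)⁻¹ = (n : ℝ) * (u n * (1 + u n)⁻¹) := by ring
        _ ≤ (n : ℝ) * Real.log (1 + u n) :=
          mul_le_mul_of_nonneg_left this (Nat.cast_nonneg n)
    · filter_upwards [hpos] with n hn
      have hub : Real.log (1 + u n) ≤ (1 + u n) - 1 := Real.log_le_sub_one_of_pos hn
      have : Real.log (1 + u n) ≤ u n := by linarith
      exact mul_le_mul_of_nonneg_left this (Nat.cast_nonneg n)
  have hcomp := (Real.continuous_exp.tendsto t).comp hlog
  refine hcomp.congr' ?_
  filter_upwards [hpos] with n hn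
  simp only [Function.comp]
  rw [Real.exp_nat_mul, Real.exp_log hn]

theorem density_convergence (d m : ℕ) (hd : 1 ≤ d) (hm : d + 1 ≤ m)
    (x : Fin m → EuclideanSpace ℝ (Fin d)) (hx0 : ∀ i, x i ≠ 0)
    (hconvpos : ∀ i, x i ∉ convexHull ℝ (x '' {j | j ≠ i}))
    (K : Set (EuclideanSpace ℝ (Fin d))) (hK : K = convexHull ℝ (Set.range x))
    (hint : IntegrableOn (fun y : EuclideanSpace ℝ (Fin d) => ‖y‖ ^ (-((d : ℝ) + 1))) Kᶜ volume)
    (f : ℕ → EuclideanSpace ℝ (Fin d) → ℝ)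
    (hf : ∀ n y, f n y = (2 / omega (d + 1)) *
      ((n : ℝ) ^ d / (1 + (n : ℝ) ^ 2 * ‖y‖ ^ 2) ^ (((d : ℝ) + 1) / 2))) :
    Tendsto (fun n : ℕ =>
        ((Nat.factorial n : ℝ) / (Nat.factorial (n - m) : ℝ)) *
          (∏ i, f n (x i)) * (1 - ∫ y in Kᶜ, f n y) ^ (n - m))
      atTop
      (nhds ((2 / omega (d + 1)) ^ m * (∏ i, ‖x i‖ ^ (-((d : ℝ) + 1))) *
        Real.exp (-(2 / omega (d + 1)) * ∫ y in Kᶜ, ‖y‖ ^ (-((d : ℝ) + 1))))) := by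
  set c : ℝ := 2 / omega (d + 1) with hc_def
  have homega : 0 < omega (d + 1) := omega_pos (by omega)
  have hc : 0 < c := by rw [hc_def]; positivity
  haveI : Nontrivial (EuclideanSpace ℝ (Fin d)) := by
    refine ⟨EuclideanSpace.single ⟨0, hd⟩ (1 : ℝ), 0, fun h => ?_⟩
    have := congrArg (fun v : EuclideanSpace ℝ (Fin d) => v ⟨0, hd⟩) h
    simpa using this
  haveI : NullSingletonClass (volume : Measure (EuclideanSpace ℝ (Fin d))) := inferInstance
  have hae : ∀ᵐ y ∂(volume.restrict Kᶜ), y ≠ (0 : EuclideanSpace ℝ (Fin d)) := by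
    rw [ae_iff]
    have hset : {y : EuclideanSpace ℝ (Fin d) | ¬ y ≠ 0} = {0} := by ext y; simp
    rw [hset, Measure.restrict_apply (measurableSet_singleton 0)]
    exact measure_mono_null Set.inter_subset_left (measure_singleton 0)
  have hf_nonneg : ∀ n y, 0 ≤ f n y := by
    intro n y
    rw [hf]
    have hden : (0:ℝ) < (1 + (n : ℝ) ^ 2 * ‖y‖ ^ 2) ^ (((d : ℝ) + 1) / 2) :=
      Real.rpow_pos_of_pos (by positivity) _
    exact mul_nonneg hc.le (div_nonneg (by positivity) hden.le)
  have hcont : ∀ n : ℕ, Continuous (fun y : EuclideanSpace ℝ (Fin d) => f n y) := by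
    intro n
    have heq : (fun y : EuclideanSpace ℝ (Fin d) => f n y)
        = fun y => c * ((n : ℝ) ^ d / (1 + (n : ℝ) ^ 2 * ‖y‖ ^ 2) ^ (((d : ℝ) + 1) / 2)) :=
      funext (hf n)
    rw [heq]
    have hden : Continuous fun y : EuclideanSpace ℝ (Fin d) =>
        (1 + (n : ℝ) ^ 2 * ‖y‖ ^ 2) ^ (((d : ℝ) + 1) / 2) :=
      (continuous_const.add (continuous_const.mul (continuous_norm.pow 2))).rpow_const
        (fun y => Or.inr (by positivity))
    exact continuous_const.mul (continuous_const.div hden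
      (fun y => (Real.rpow_pos_of_pos (by positivity) _).ne'))
  have hpt : ∀ y : EuclideanSpace ℝ (Fin d), y ≠ 0 →
      Tendsto (fun n : ℕ => (n : ℝ) * f n y) atTop (nhds (c * ‖y‖ ^ (-((d : ℝ) + 1)))) := by
    intro y hy
    have hr : 0 < ‖y‖ := norm_pos_iff.mpr hy
    have h1 := (aux_tendsto d hr).const_mul c
    refine h1.congr fun n => ?_
    rw [hf]
    ring
  have hmeas : ∀ n : ℕ, AEStronglyMeasurable (fun y => (n : ℝ) * f n y) (volume.restrict Kᶜ) :=
    fun n => (continuous_const.mul (hcont n)).aestronglyMeasurable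
  have hint' : Integrable (fun y : EuclideanSpace ℝ (Fin d) => c * ‖y‖ ^ (-((d : ℝ) + 1)))
      (volume.restrict Kᶜ) := hint.const_mul c
  have hbound : ∀ n : ℕ, ∀ᵐ y ∂(volume.restrict Kᶜ),
      ‖(n : ℝ) * f n y‖ ≤ c * ‖y‖ ^ (-((d : ℝ) + 1)) := by
    intro n
    filter_upwards [hae] with y hy
    have hr : 0 < ‖y‖ := norm_pos_iff.mpr hy
    rw [Real.norm_eq_abs, abs_of_nonneg (mul_nonneg (Nat.cast_nonneg n) (hf_nonneg n y))]
    have h1 : (n : ℝ) * f n y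
        = c * ((n : ℝ) ^ (d + 1) / (1 + (n : ℝ) ^ 2 * ‖y‖ ^ 2) ^ (((d : ℝ) + 1) / 2)) := by
      rw [hf]; ring
    rw [h1]
    exact mul_le_mul_of_nonneg_left (aux_bound d n hr) hc.le
  have hDCT : Tendsto (fun n : ℕ => ∫ y in Kᶜ, (n : ℝ) * f n y) atTop
      (nhds (∫ y in Kᶜ, c * ‖y‖ ^ (-((d : ℝ) + 1)))) :=
    tendsto_integral_of_dominated_convergence _ hmeas hint' hbound
      (by filter_upwards [hae] with y hy using hpt y hy)
  have hcJ : (∫ y in Kᶜ, c * ‖y‖ ^ (-((d : ℝ) + 1)))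
      = c * ∫ y in Kᶜ, ‖y‖ ^ (-((d : ℝ) + 1)) := integral_const_mul c _
  rw [hcJ] at hDCT
  have hnI : Tendsto (fun n : ℕ => (n : ℝ) * ∫ y in Kᶜ, f n y) atTop
      (nhds (c * ∫ y in Kᶜ, ‖y‖ ^ (-((d : ℝ) + 1)))) :=
    hDCT.congr fun n => integral_const_mul _ _
  have hI0 : Tendsto (fun n : ℕ => ∫ y in Kᶜ, f n y) atTop (nhds 0) := by
    have h1 := tendsto_one_div_atTop_nhds_zero_nat.mul hnI
    rw [zero_mul] at h1
    refine h1.congr' ?_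
    filter_upwards [eventually_ge_atTop 1] with n hn
    have hn0 : (n : ℝ) ≠ 0 := by
      have : (1:ℝ) ≤ (n:ℝ) := by exact_mod_cast hn
      linarith
    field_simp
  have hC : Tendsto (fun n : ℕ => (1 - ∫ y in Kᶜ, f n y) ^ (n - m)) atTop
      (nhds (Real.exp (-(c * ∫ y in Kᶜ, ‖y‖ ^ (-((d : ℝ) + 1)))))) := by
    have hu : Tendsto (fun n : ℕ => (n : ℝ) * (-(∫ y in Kᶜ, f n y))) atTop
        (nhds (-(c * ∫ y in Kᶜ, ‖y‖ ^ (-((d : ℝ) + 1))))) := by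
      refine hnI.neg.congr fun n => ?_
      rw [mul_neg]
    have hexp := aux_exp (fun n : ℕ => -(∫ y in Kᶜ, f n y)) _ hu
    have hone : Tendsto (fun n : ℕ => 1 - ∫ y in Kᶜ, f n y) atTop (nhds 1) := by
      have h1 : Tendsto (fun n : ℕ => (1:ℝ) - ∫ y in Kᶜ, f n y) atTop (nhds (1 - 0)) :=
        (tendsto_const_nhds (x := (1:ℝ))).sub hI0
      rw [sub_zero] at h1
      exact h1
    have hpow : Tendsto (fun n : ℕ => (1 - ∫ y in Kᶜ, f n y) ^ m) atTop (nhds 1) := by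
      simpa using hone.pow m
    have hdiv := hexp.div hpow one_ne_zero
    rw [div_one] at hdiv
    refine hdiv.congr' ?_
    filter_upwards [hone.eventually (eventually_gt_nhds (by norm_num : (0:ℝ) < 1)),
      eventually_ge_atTop m] with n hne hn
    have h0 : (1 - ∫ y in Kᶜ, f n y) ≠ 0 := ne_of_gt hne
    rw [pow_sub₀ _ h0 hn]
    simp only [Pi.div_apply, sub_eq_add_neg, div_eq_mul_inv]
  have hA : Tendsto (fun n : ℕ => (n.descFactorial m : ℝ) / (n : ℝ) ^ m) atTop (nhds 1) := by
    have heach : ∀ i ∈ Finset.range m,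
        Tendsto (fun n : ℕ => ((n : ℝ) - (i : ℝ)) / (n : ℝ)) atTop (nhds 1) := by
      intro i _
      have h1 : Tendsto (fun n : ℕ => 1 - (i : ℝ) * (1 / (n : ℝ))) atTop
          (nhds (1 - (i : ℝ) * 0)) :=
        tendsto_const_nhds.sub (tendsto_one_div_atTop_nhds_zero_nat.const_mul (i : ℝ))
      rw [mul_zero, sub_zero] at h1
      refine h1.congr' ?_
      filter_upwards [eventually_ge_atTop 1] with n hn
      have hn0 : (n : ℝ) ≠ 0 := by
        have : (1:ℝ) ≤ (n:ℝ) := by exact_mod_cast hn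
        linarith
      field_simp
    have hprod := tendsto_finset_prod (Finset.range m) heach
    rw [Finset.prod_const_one] at hprod
    refine hprod.congr' ?_
    filter_upwards [eventually_ge_atTop m] with n hn
    have hcast : (n.descFactorial m : ℝ) = ∏ i ∈ Finset.range m, ((n : ℝ) - (i : ℝ)) := by
      rw [Nat.descFactorial_eq_prod_range, Nat.cast_prod]
      refine Finset.prod_congr rfl fun i hi => ?_
      have hi' : i ≤ n := ((Finset.mem_range.mp hi).le).trans hn
      rw [Nat.cast_sub hi']
    rw [hcast, Finset.prod_div_distrib, Finset.prod_const, Finset.card_range]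
  have hfact : ∀ᶠ n in atTop,
      ((n.factorial : ℝ) / ((n - m).factorial : ℝ)) = (n.descFactorial m : ℝ) := by
    filter_upwards [eventually_ge_atTop m] with n hn
    rw [div_eq_iff (Nat.cast_ne_zero.mpr (Nat.factorial_ne_zero _))]
    norm_cast
    rw [mul_comm]
    exact (Nat.factorial_mul_descFactorial hn).symm
  have hB : Tendsto (fun n : ℕ => ∏ i, (n : ℝ) * f n (x i)) atTop
      (nhds (∏ i, c * ‖x i‖ ^ (-((d : ℝ) + 1)))) :=
    tendsto_finset_prod Finset.univ (fun i _ => hpt (x i) (hx0 i))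
  have hmain := (hA.mul hB).mul hC
  have hlim_eq : (1 * ∏ i, c * ‖x i‖ ^ (-((d : ℝ) + 1)))
        * Real.exp (-(c * ∫ y in Kᶜ, ‖y‖ ^ (-((d : ℝ) + 1))))
      = c ^ m * (∏ i, ‖x i‖ ^ (-((d : ℝ) + 1)))
        * Real.exp (-c * ∫ y in Kᶜ, ‖y‖ ^ (-((d : ℝ) + 1))) := by
    rw [one_mul, Finset.prod_mul_distrib, Finset.prod_const, Finset.card_univ,
      Fintype.card_fin, neg_mul]
  rw [hlim_eq] at hmain
  refine hmain.congr' ?_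
  filter_upwards [eventually_ge_atTop m, eventually_ge_atTop 1, hfact] with n hnm hn1 hfn
  have hprodeq : (∏ i, (n : ℝ) * f n (x i)) = (n : ℝ) ^ m * ∏ i, f n (x i) := by
    rw [Finset.prod_mul_distrib, Finset.prod_const, Finset.card_univ, Fintype.card_fin]
  have hn0 : ((n : ℝ)) ^ m ≠ 0 := pow_ne_zero _ (Nat.cast_ne_zero.mpr (by omega))
  rw [hprodeq, hfn]
  field_simp
end
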